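/- If T : C(X) → C(X) is fully order preserving and f ∈ C(X) is finite everywhere, then T(f) is also finite everywhere. -/
import Mathlib


open Set

noncomputable section

variable {X : Type*}

/-- The class of proper, lower semicontinuous, convex functions `X → ℝ ∪ {+∞}`,
encoded as `EReal`-valued functions never taking the value `⊥`. -/
def IsClFun (X : Type*) [NormedAddCommGroup X] [NormedSpace ℝ X] (f : X → EReal) : Prop :=
  (∀ x, f x ≠ ⊥) ∧ (∃ x, f x ≠ ⊤) ∧ LowerSemicontinuous f ∧
  ∀ x y : X, ∀ a b : ℝ, 0 ≤ a → 0 ≤ b → a + b = 1 →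
    f (a • x + b • y) ≤ (a : EReal) * f x + (b : EReal) * f y

/-- `C(X)`, as a subtype. -/
abbrev Cl (X : Type*) [NormedAddCommGroup X] [NormedSpace ℝ X] :=
  {f : X → EReal // IsClFun X f}

/-- The continuous affine function `h_{u,α}(x) = ⟨u,x⟩ + α`. -/
def aff [NormedAddCommGroup X] [NormedSpace ℝ X] (u : X →L[ℝ] ℝ) (α : ℝ) : X → EReal :=
  fun x => ((u x + α : ℝ) : EReal)

theorem affMem [NormedAddCommGroup X] [NormedSpace ℝ X] (u : X →L[ℝ] ℝ) (α : ℝ) :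
    IsClFun X (aff u α) := by
  refine ⟨fun x => EReal.coe_ne_bot _, ⟨0, EReal.coe_ne_top _⟩, ?_, ?_⟩
  · exact (continuous_coe_real_ereal.comp (by continuity)).lowerSemicontinuous
  · intro x y a b ha hb hab
    simp only [aff, map_add, map_smul, smul_eq_mul]
    rw [← EReal.coe_mul, ← EReal.coe_mul, ← EReal.coe_add, EReal.coe_le_coe_iff]
    have h : a * α + b * α = α := by rw [← add_mul, hab, one_mul]
    nlinarith

/-- `h_{u,α}` as an element of `C(X)`. -/
def affCl [NormedAddCommGroup X] [NormedSpace ℝ X] (u : X →L[ℝ] ℝ) (α : ℝ) : Cl X :=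
  ⟨aff u α, affMem u α⟩

/-- An operator on `C(X)` is fully order preserving if it is onto and
`f ≤ g ↔ T f ≤ T g` (pointwise order). -/
def FullyOrderPreserving [NormedAddCommGroup X] [NormedSpace ℝ X]
    (T : Cl X → Cl X) : Prop :=
  Function.Surjective T ∧ ∀ f g : Cl X, f.1 ≤ g.1 ↔ (T f).1 ≤ (T g).1


open Classical in
lemma ind_mem [NormedAddCommGroup X] [NormedSpace ℝ X] (x₀ : X) :
    IsClFun X (fun x => if x = x₀ then (0 : EReal) else ⊤) := by
  refine ⟨fun x => ?_, ⟨x₀, by simp⟩, ?_, ?_⟩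
  · by_cases h : x = x₀ <;> simp [h]
  · intro x y hy
    by_cases h : x = x₀
    · simp only [if_pos h] at hy
      filter_upwards with z
      by_cases hz : z = x₀
      · simpa [hz] using hy
      · simp only [if_neg hz]
        exact hy.trans_le le_top
    · have hopen : IsOpen ({x₀}ᶜ : Set X) := isOpen_compl_singleton
      filter_upwards [hopen.mem_nhds (by simpa using h)] with z hz
      simp only [Set.mem_compl_iff, Set.mem_singleton_iff] at hz
      simp only [if_neg h] at hy
      simpa [hz] using hy
  · intro x y a b ha hb hab
    rcases eq_or_lt_of_le ha with ha0 | ha0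
    · have hb1 : b = 1 := by linarith
      subst hb1; rw [← ha0]; simp
    rcases eq_or_lt_of_le hb with hb0 | hb0
    · have ha1 : a = 1 := by linarith
      subst ha1; rw [← hb0]; simp
    have hfb : ∀ z : X, (if z = x₀ then (0 : EReal) else ⊤) ≠ ⊥ := by
      intro z; by_cases h : z = x₀ <;> simp [h]
    by_cases hx : x = x₀
    · by_cases hy : y = x₀
      · subst hx; subst hy
        rw [← add_smul, hab, one_smul]
        simp
      · have hne : (b : EReal) * ⊤ = ⊤ := EReal.coe_mul_top_of_pos hb0
        simp only [if_neg hy, hne]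
        have : (a : EReal) * (if x = x₀ then (0 : EReal) else ⊤) ≠ ⊥ := by
          simp [if_pos hx]
        rw [EReal.add_top_of_ne_bot this]
        exact le_top
    · have hne : (a : EReal) * ⊤ = ⊤ := EReal.coe_mul_top_of_pos ha0
      simp only [if_neg hx, hne]
      have : (b : EReal) * (if y = x₀ then (0 : EReal) else ⊤) ≠ ⊥ := by
        by_cases h : y = x₀
        · simp [if_pos h]
        · simp [if_neg h, EReal.coe_mul_top_of_pos hb0]
      rw [EReal.top_add_of_ne_bot this]
      exact le_top

lemma lsc_max {f g : X → EReal} [NormedAddCommGroup X]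
    (hf : LowerSemicontinuous f) (hg : LowerSemicontinuous g) :
    LowerSemicontinuous (fun x => max (f x) (g x)) := by
  intro x y hy
  rcases lt_max_iff.1 hy with h | h
  · filter_upwards [hf x y h] with z hz
    exact hz.trans_le (le_max_left _ _)
  · filter_upwards [hg x y h] with z hz
    exact hz.trans_le (le_max_right _ _)

lemma max_mem [NormedAddCommGroup X] [NormedSpace ℝ X] (f g : X → EReal)
    (hf : IsClFun X f) (hg : IsClFun X g) (hfin : ∀ x, f x ≠ ⊤) :
    IsClFun X (fun x => max (f x) (g x)) := by
  obtain ⟨x₁, hx₁⟩ := hg.2.1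
  refine ⟨fun x => ?_, ⟨x₁, ?_⟩, ?_, ?_⟩
  · simp only [ne_eq, max_eq_bot]
    exact fun h => hf.1 x h.1
  · simp only [ne_eq, max_eq_top, not_or]
    exact ⟨hfin x₁, hx₁⟩
  · exact lsc_max hf.2.2.1 hg.2.2.1
  · intro x y a b ha hb hab
    have hmul : ∀ (c : ℝ) (u v : EReal), 0 ≤ c → u ≤ v → (c : EReal) * u ≤ (c : EReal) * v := by
      intro c u v hc huv
      exact mul_le_mul_of_nonneg_left huv (by exact_mod_cast hc)
    have h1 := hf.2.2.2 x y a b ha hb hab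
    have h2 := hg.2.2.2 x y a b ha hb hab
    refine max_le ?_ ?_
    · exact h1.trans (add_le_add (hmul a _ _ ha (le_max_left _ _))
        (hmul b _ _ hb (le_max_left _ _)))
    · exact h2.trans (add_le_add (hmul a _ _ ha (le_max_right _ _))
        (hmul b _ _ hb (le_max_right _ _)))

open Classical in
theorem image_finite_everywhere
    [NormedAddCommGroup X] [NormedSpace ℝ X] [CompleteSpace X]
    (T : Cl X → Cl X) (hT : FullyOrderPreserving T)
    (f : Cl X) (hf : ∀ x, f.1 x ≠ ⊤) :
    ∀ x, (T f).1 x ≠ ⊤ := by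
  intro x₀
  set indC : Cl X := ⟨fun x => if x = x₀ then (0 : EReal) else ⊤, ind_mem x₀⟩ with hind
  obtain ⟨g, hgT⟩ := hT.1 indC
  set h : Cl X := ⟨fun x => max (f.1 x) (g.1 x), max_mem f.1 g.1 f.2 g.2 hf⟩ with hh
  have hfh : f.1 ≤ h.1 := fun x => le_max_left _ _
  have hgh : g.1 ≤ h.1 := fun x => le_max_right _ _
  have h1 : (T f).1 ≤ (T h).1 := (hT.2 f h).1 hfh
  have h2 : indC.1 ≤ (T h).1 := hgT ▸ (hT.2 g h).1 hgh
  obtain ⟨x₂, hx₂⟩ := (T h).2.2.1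
  have hx20 : x₂ = x₀ := by
    by_contra hne
    have := h2 x₂
    simp only [hind, if_neg hne, top_le_iff] at this
    exact hx₂ this
  intro htop
  exact hx₂ (top_le_iff.mp (hx20 ▸ htop ▸ h1 x₀))
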